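/- On-line curve representation invariant, order-theoretic core: let P be a finite poset and 𝒞 a family of y-monotone curves spanned between two horizontal lines representing P (curves intersect iff elements are incomparable; disjoint curves ordered left-to-right as in P), satisfying property (*): for every linear extension L of P there is a horizontal line crossing all curves in distinct points in the left-to-right order given by L. Then for any extension of P by one new element x, the curve for x constructed through the ε-tubes of the lines of (*) yields a representation of P ∪ {x} again satisfying (*). -/

import Mathlib

set_option maxHeartbeats 1000000
set_option linter.unusedSectionVars false
set_option linter.unusedVariables false


open Set

/-- A family of y-monotone curves (graphs of continuous functions on [0,1], the
x-coordinate as a function of the height) represents the strict order `lt`: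
for lt i j the curve of i lies strictly left of the curve of j at every height (so
the curves are disjoint and ordered left-to-right), and two distinct curves intersect
iff the corresponding elements are incomparable. -/
def RepCurves {ι : Type*} (lt : ι → ι → Prop) (c : ι → ℝ → ℝ) : Prop :=
  (∀ i, ContinuousOn (c i) (Icc 0 1)) ∧
  (∀ i j, lt i j → ∀ t ∈ Icc (0:ℝ) 1, c i t < c j t) ∧
  (∀ i j, i ≠ j → ((¬ lt i j ∧ ¬ lt j i) ↔ ∃ t ∈ Icc (0:ℝ) 1, c i t = c j t))

/-- Property (*): for every linear extension L of the order there is a horizontal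
line (a height t) crossing the curves in distinct points in the left-to-right order
given by L. -/
def StarProp {ι : Type*} (lt : ι → ι → Prop) (c : ι → ℝ → ℝ) : Prop :=
  ∀ L : ι → ι → Prop, IsStrictTotalOrder ι L → (∀ i j, lt i j → L i j) →
    ∃ t ∈ Icc (0:ℝ) 1, ∀ i j, L i j → c i t < c j t

/-- On-line curve representation invariant. Let X be a finite poset,
x ∈ X a new element and suppose the elements other than x are represented by
y-monotone curves between two lines satisfying property (*) for the restricted order.
Then there is a curve for x such that the extended family represents the whole poset
and again satisfies (*). -/

-- general: continuity of Finset.sup'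
lemma contOn_sup' {κ : Type*} (s : Finset κ) (hs : s.Nonempty) (f : κ → ℝ → ℝ) (S : Set ℝ)
    (hf : ∀ i ∈ s, ContinuousOn (f i) S) :
    ContinuousOn (fun t => s.sup' hs (fun i => f i t)) S := by
  induction hs using Finset.Nonempty.cons_induction with
  | singleton i => exact (hf i (by simp)).congr (fun t ht => by simp)
  | cons i s hi hs ih =>
    exact (ContinuousOn.sup' (hf i (by simp))
      (ih fun j hj => hf j (Finset.mem_cons_of_mem hj))).congr
      (fun t ht => by rw [Finset.sup'_cons]; rfl)

lemma contOn_inf' {κ : Type*} (s : Finset κ) (hs : s.Nonempty) (f : κ → ℝ → ℝ) (S : Set ℝ)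
    (hf : ∀ i ∈ s, ContinuousOn (f i) S) :
    ContinuousOn (fun t => s.inf' hs (fun i => f i t)) S := by
  induction hs using Finset.Nonempty.cons_induction with
  | singleton i => exact (hf i (by simp)).congr (fun t ht => by simp)
  | cons i s hi hs ih =>
    exact (ContinuousOn.inf' (hf i (by simp))
      (ih fun j hj => hf j (Finset.mem_cons_of_mem hj))).congr
      (fun t ht => by rw [Finset.inf'_cons]; rfl)

-- tent function
noncomputable def tent (p q h t : ℝ) : ℝ :=
  max 0 (min h (min ((4*h/(q-p))*(t-p)) ((4*h/(q-p))*(q-t))))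

lemma tent_cont (p q h : ℝ) : Continuous (tent p q h) := by
  unfold tent; fun_prop

lemma tent_nonneg (p q h t : ℝ) : 0 ≤ tent p q h t := le_max_left _ _

lemma tent_le (p q h t : ℝ) (hh : 0 ≤ h) : tent p q h t ≤ h := by
  unfold tent
  rcases le_or_gt (min h (min ((4*h/(q-p))*(t-p)) ((4*h/(q-p))*(q-t)))) 0 with h1 | h1
  · simpa [max_eq_left h1] using hh
  · rw [max_eq_right h1.le]; exact min_le_left _ _

lemma tent_zero_outside (p q h t : ℝ) (hpq : p < q) (ht : t ≤ p ∨ q ≤ t) :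
    tent p q h t = 0 := by
  rcases le_or_gt h 0 with hh | hh
  · have : min h (min ((4*h/(q-p))*(t-p)) ((4*h/(q-p))*(q-t))) ≤ 0 :=
      le_trans (min_le_left _ _) hh
    simp [tent, max_eq_left this]
  · have hqp : 0 < q - p := by linarith
    have hK : 0 < 4*h/(q-p) := by positivity
    have : min ((4*h/(q-p))*(t-p)) ((4*h/(q-p))*(q-t)) ≤ 0 := by
      rcases ht with ht | ht
      · exact le_trans (min_le_left _ _) (mul_nonpos_of_nonneg_of_nonpos hK.le (by linarith))
      · exact le_trans (min_le_right _ _) (mul_nonpos_of_nonneg_of_nonpos hK.le (by linarith))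
    simp [tent, max_eq_left (le_trans (min_le_right _ _) this)]

lemma tent_peak (p q h : ℝ) (hpq : p < q) (hh : 0 ≤ h) : tent p q h ((p+q)/2) = h := by
  have hqp : q - p ≠ 0 := by intro h0; linarith
  have h1 : (4*h/(q-p))*((p+q)/2 - p) = 2*h := by field_simp; ring
  have h2 : (4*h/(q-p))*(q - (p+q)/2) = 2*h := by field_simp; ring
  rw [tent, h1, h2]
  rw [min_self, min_eq_left (by linarith), max_eq_right hh]

section
attribute [local instance] Classical.propDecidable

lemma rank_eq' {κ : Type*} [Fintype κ] [DecidableEq κ] {n : ℕ} (e : κ ≃ Fin n) (i : κ) :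
    (Finset.univ.filter (fun j => e j < e i)).card = (e i : ℕ) := by
  have : (Finset.univ.filter (fun j => e j < e i)) = (Finset.Iio (e i)).map e.symm.toEmbedding := by
    ext j
    simp [Finset.mem_map_equiv]
  rw [this, Finset.card_map, Fin.card_Iio]

-- strict total order from equiv to Fin
lemma sto_of_equiv {κ : Type*} {n : ℕ} (e : κ ≃ Fin n) :
    IsStrictTotalOrder κ (fun i j => e i < e j) where
  trichotomous i j := by
    intro h1 h2
    rcases lt_trichotomy (e i) (e j) with h | h | h
    · exact absurd h h1
    · exact e.injective (by exact h)
    · exact absurd h h2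
  irrefl i := lt_irrefl _
  trans i j k h1 h2 := lt_trans h1 h2

lemma exists_equiv_of_sto {κ : Type*} [Fintype κ] [DecidableEq κ] (L : κ → κ → Prop)
    (hL : IsStrictTotalOrder κ L) :
    ∃ e : κ ≃ Fin (Fintype.card κ), ∀ i j, e i < e j ↔ L i j := by
  haveI := hL
  letI lino : LinearOrder κ := linearOrderOfSTO L
  let e0 := monoEquivOfFin κ rfl
  refine ⟨e0.symm.toEquiv, fun i j => ?_⟩
  exact (e0.symm.lt_iff_lt (x := i) (y := j)).trans Iff.rfl

-- linear extension with a prescribed incomparable pair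
lemma exists_sto_pair {X : Type*} [PartialOrder X] {a b : X}
    (h1 : ¬ a < b) (h2 : ¬ b < a) (hne : a ≠ b) :
    ∃ L : X → X → Prop, IsStrictTotalOrder X L ∧ (∀ i j : X, i < j → L i j) ∧ L a b := by
  classical
  set r : X → X → Prop := fun i j => i ≤ j ∨ (i ≤ a ∧ b ≤ j) with hr
  have hba : ¬ b ≤ a := fun h => by
    rcases lt_or_eq_of_le h with h' | h'
    · exact h2 h'
    · exact hne h'.symm
  haveI : IsPartialOrder X r := by
    refine { refl := fun i => Or.inl le_rfl, trans := ?_, antisymm := ?_ }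
    · rintro i j k (h | ⟨hia, hbj⟩) (h' | ⟨hja, hbk⟩)
      · exact Or.inl (le_trans h h')
      · exact Or.inr ⟨le_trans h hja, hbk⟩
      · exact Or.inr ⟨hia, le_trans hbj h'⟩
      · exact absurd (le_trans hbj hja) hba
    · rintro i j (h | ⟨hia, hbj⟩) (h' | ⟨hja, hbi⟩)
      · exact le_antisymm h h'
      · exact absurd (le_trans hbi (le_trans h hja)) hba
      · exact absurd (le_trans hbj (le_trans h' hia)) hba
      · exact absurd (le_trans hbj hja) hba
  obtain ⟨s, hs, hrs⟩ := extend_partialOrder r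
  refine ⟨fun i j => s i j ∧ i ≠ j, ?_, ?_, ?_⟩
  · haveI := hs.toIsPartialOrder
    haveI := hs.toTotal
    refine { trichotomous := ?_, irrefl := fun i h => h.2 rfl, trans := ?_ }
    · intro i j hn1 hn2
      by_contra hij
      rcases total_of s i j with h | h
      · exact hn1 ⟨h, hij⟩
      · exact hn2 ⟨h, Ne.symm hij⟩
    · rintro i j k ⟨hij, hij'⟩ ⟨hjk, hjk'⟩
      refine ⟨_root_.trans hij hjk, fun h => ?_⟩
      subst h
      exact hij' (antisymm hij hjk)
  · intro i j h
    exact ⟨hrs _ _ (Or.inl h.le), h.ne⟩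
  · exact ⟨hrs _ _ (Or.inr ⟨le_rfl, le_rfl⟩), hne⟩

end

section Defs
attribute [local instance] Classical.propDecidable

variable {X : Type*} [Fintype X] [DecidableEq X] [PartialOrder X]
variable (x : X) (c : {y : X // y ≠ x} → ℝ → ℝ)

noncomputable def DD : Finset {y : X // y ≠ x} := Finset.univ.filter (fun i => (i : X) < x)
noncomputable def UU : Finset {y : X // y ≠ x} := Finset.univ.filter (fun i => x < (i : X))

variable (B0 : ℝ)

noncomputable def lof (t : ℝ) : ℝ :=
  if h : (DD x).Nonempty then (DD x).sup' h (fun i => c i t) else -(B0+1)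

noncomputable def hif (t : ℝ) : ℝ :=
  if h : (UU x).Nonempty then (UU x).inf' h (fun i => c i t) else (B0+1)

def ExtE (e : {y : X // y ≠ x} ≃ Fin (Fintype.card {y : X // y ≠ x})) : Prop :=
  ∀ i j : {y : X // y ≠ x}, (i : X) < (j : X) → e i < e j

def GoodT (e : {y : X // y ≠ x} ≃ Fin (Fintype.card {y : X // y ≠ x})) (ab : ℝ × ℝ) : Prop :=
  0 ≤ ab.1 ∧ ab.1 < ab.2 ∧ ab.2 ≤ 1 ∧
  ∀ s ∈ Icc ab.1 ab.2, ∀ i j : {y : X // y ≠ x}, e i < e j → c i s < c j s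

noncomputable def tub (e : {y : X // y ≠ x} ≃ Fin (Fintype.card {y : X // y ≠ x})) : ℝ × ℝ :=
  if h : ∃ ab, GoodT x c e ab then h.choose else (0, 1)

noncomputable def ta (e : {y : X // y ≠ x} ≃ Fin (Fintype.card {y : X // y ≠ x})) : ℝ := (tub x c e).1
noncomputable def tb (e : {y : X // y ≠ x} ≃ Fin (Fintype.card {y : X // y ≠ x})) : ℝ := (tub x c e).2
noncomputable def tmid (e : {y : X // y ≠ x} ≃ Fin (Fintype.card {y : X // y ≠ x})) : ℝ :=
  (ta x c e + tb x c e)/2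
noncomputable def tqa (e : {y : X // y ≠ x} ≃ Fin (Fintype.card {y : X // y ≠ x})) : ℝ :=
  (3*ta x c e + tb x c e)/4
noncomputable def tqb (e : {y : X // y ≠ x} ≃ Fin (Fintype.card {y : X // y ≠ x})) : ℝ :=
  (ta x c e + 3*tb x c e)/4

noncomputable def kmin (e : {y : X // y ≠ x} ≃ Fin (Fintype.card {y : X // y ≠ x})) : ℕ :=
  if h : (DD x).Nonempty then (DD x).sup' h (fun d => (e d : ℕ) + 1) else 0

noncomputable def kmax (e : {y : X // y ≠ x} ≃ Fin (Fintype.card {y : X // y ≠ x})) : ℕ :=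
  if h : (UU x).Nonempty then (UU x).inf' h (fun u => (e u : ℕ)) else Fintype.card {y : X // y ≠ x}

noncomputable def VV (e : {y : X // y ≠ x} ≃ Fin (Fintype.card {y : X // y ≠ x})) : Finset ℕ :=
  Finset.Icc (kmin x e) (kmax x e)

noncomputable def AF (e : {y : X // y ≠ x} ≃ Fin (Fintype.card {y : X // y ≠ x})) (k : ℕ) (t : ℝ) : ℝ :=
  (insert none ((Finset.univ.filter (fun i => (e i : ℕ) < k)).image some)).sup'
    (Finset.insert_nonempty _ _)
    (fun o => Option.elim o (lof x c B0 t) (fun i => c i t))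

noncomputable def BF (e : {y : X // y ≠ x} ≃ Fin (Fintype.card {y : X // y ≠ x})) (k : ℕ) (t : ℝ) : ℝ :=
  (insert none ((Finset.univ.filter (fun i => k ≤ (e i : ℕ))).image some)).inf'
    (Finset.insert_nonempty _ _)
    (fun o => Option.elim o (hif x c B0 t) (fun i => c i t))

noncomputable def MF (e : {y : X // y ≠ x} ≃ Fin (Fintype.card {y : X // y ≠ x})) (k : ℕ) (t : ℝ) : ℝ :=
  (AF x c B0 e k t + BF x c B0 e k t)/2

noncomputable def epsA (e : {y : X // y ≠ x} ≃ Fin (Fintype.card {y : X // y ≠ x})) : ℝ :=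
  if h : (VV x e).Nonempty then
    (1/2) * min 1 ((VV x e).inf' h (fun k =>
      (MF x c B0 e k (tqa x c e) - lof x c B0 (tqa x c e)) /
        (hif x c B0 (tqa x c e) - lof x c B0 (tqa x c e))))
  else 1/4

noncomputable def epsB (e : {y : X // y ≠ x} ≃ Fin (Fintype.card {y : X // y ≠ x})) : ℝ :=
  if h : (VV x e).Nonempty then
    (1/2) * min 1 ((VV x e).inf' h (fun k =>
      (hif x c B0 (tqb x c e) - MF x c B0 e k (tqb x c e)) /
        (hif x c B0 (tqb x c e) - lof x c B0 (tqb x c e))))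
  else 1/4

noncomputable def hdn (e : {y : X // y ≠ x} ≃ Fin (Fintype.card {y : X // y ≠ x})) : ℝ :=
  1/2 - epsA x c B0 e
noncomputable def hup (e : {y : X // y ≠ x} ≃ Fin (Fintype.card {y : X // y ≠ x})) : ℝ :=
  1/2 - epsB x c B0 e

noncomputable def psiF (t : ℝ) : ℝ :=
  1/2 + ∑ e ∈ Finset.univ.filter (ExtE x),
    (tent (tmid x c e) (tb x c e) (hup x c B0 e) t - tent (ta x c e) (tmid x c e) (hdn x c B0 e) t)

noncomputable def gF (t : ℝ) : ℝ :=
  lof x c B0 t + psiF x c B0 t * (hif x c B0 t - lof x c B0 t)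

end Defs
section Lems
attribute [local instance] Classical.propDecidable

variable {X : Type*} [Fintype X] [DecidableEq X] [PartialOrder X]
variable (x : X) (c : {y : X // y ≠ x} → ℝ → ℝ) (B0 : ℝ)
variable (hc : ∀ i, ContinuousOn (c i) (Icc 0 1))
variable (hlt : ∀ i j : {y : X // y ≠ x}, (i : X) < (j : X) → ∀ t ∈ Icc (0:ℝ) 1, c i t < c j t)
variable (hB : ∀ i, ∀ t ∈ Icc (0:ℝ) 1, |c i t| ≤ B0)
variable (hB0 : 0 ≤ B0)
variable (hstar : StarProp (fun a b : {y : X // y ≠ x} => (a : X) < (b : X)) c)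

lemma lof_eq (h : (DD x).Nonempty) (t : ℝ) :
    lof x c B0 t = (DD x).sup' h (fun i => c i t) := dif_pos h

lemma lof_eq' (h : ¬ (DD x).Nonempty) (t : ℝ) : lof x c B0 t = -(B0+1) := dif_neg h

lemma hif_eq (h : (UU x).Nonempty) (t : ℝ) :
    hif x c B0 t = (UU x).inf' h (fun i => c i t) := dif_pos h

lemma hif_eq' (h : ¬ (UU x).Nonempty) (t : ℝ) : hif x c B0 t = B0+1 := dif_neg h

include hc in
lemma lof_cont : ContinuousOn (lof x c B0) (Icc 0 1) := by
  by_cases h : (DD x).Nonempty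
  · exact (contOn_sup' _ h _ _ (fun i _ => hc i)).congr (fun t _ => lof_eq x c B0 h t)
  · exact continuousOn_const.congr (fun t _ => lof_eq' x c B0 h t)

include hc in
lemma hif_cont : ContinuousOn (hif x c B0) (Icc 0 1) := by
  by_cases h : (UU x).Nonempty
  · exact (contOn_inf' _ h _ _ (fun i _ => hc i)).congr (fun t _ => hif_eq x c B0 h t)
  · exact continuousOn_const.congr (fun t _ => hif_eq' x c B0 h t)

lemma le_lof {i} (hi : i ∈ DD x) (t : ℝ) : c i t ≤ lof x c B0 t := by
  rw [lof_eq x c B0 ⟨i, hi⟩ t]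
  exact Finset.le_sup' (fun i => c i t) hi

lemma hif_le {i} (hi : i ∈ UU x) (t : ℝ) : hif x c B0 t ≤ c i t := by
  rw [hif_eq x c B0 ⟨i, hi⟩ t]
  exact Finset.inf'_le (fun i => c i t) hi

include hB in
lemma neg_lt_c (i) {t : ℝ} (ht : t ∈ Icc (0:ℝ) 1) : -(B0+1) < c i t := by
  have h1 := abs_le.mp (hB i t ht); linarith [h1.1]

include hB in
lemma c_lt_pos (i) {t : ℝ} (ht : t ∈ Icc (0:ℝ) 1) : c i t < B0+1 := by
  have h1 := abs_le.mp (hB i t ht); linarith [h1.2]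

include hlt hB hB0 in
lemma lof_lt_hif {t : ℝ} (ht : t ∈ Icc (0:ℝ) 1) : lof x c B0 t < hif x c B0 t := by
  by_cases hD : (DD x).Nonempty <;> by_cases hU : (UU x).Nonempty
  · rw [lof_eq x c B0 hD t, hif_eq x c B0 hU t, Finset.sup'_lt_iff]
    intro d hd
    rw [Finset.lt_inf'_iff]
    intro u hu
    have hd' : (d : X) < x := (Finset.mem_filter.mp hd).2
    have hu' : x < (u : X) := (Finset.mem_filter.mp hu).2
    exact hlt d u (lt_trans hd' hu') t ht
  · rw [lof_eq x c B0 hD t, hif_eq' x c B0 hU t, Finset.sup'_lt_iff]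
    intro d _
    exact c_lt_pos x c B0 hB d ht
  · rw [lof_eq' x c B0 hD t, hif_eq x c B0 hU t, Finset.lt_inf'_iff]
    intro u _
    exact neg_lt_c x c B0 hB u ht
  · rw [lof_eq' x c B0 hD t, hif_eq' x c B0 hU t]
    linarith

include hc hstar in
lemma exists_goodT (e) (he : ExtE x e) : ∃ ab : ℝ × ℝ, GoodT x c e ab := by
  obtain ⟨t, ht, hord⟩ := hstar (fun i j => e i < e j) (sto_of_equiv e) (fun i j hij => he i j hij)
  have ht' := mem_Icc.mp ht
  by_cases hP : (Finset.univ.filter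
      (fun p : {y : X // y ≠ x} × {y : X // y ≠ x} => e p.1 < e p.2)).Nonempty
  · set P := Finset.univ.filter
      (fun p : {y : X // y ≠ x} × {y : X // y ≠ x} => e p.1 < e p.2) with hPdef
    set F : ℝ → ℝ := fun s => P.inf' hP (fun p => c p.2 s - c p.1 s) with hFdef
    have hFc : ContinuousOn F (Icc 0 1) :=
      contOn_inf' _ hP _ _ (fun p _ => (hc p.2).sub (hc p.1))
    have hFt : 0 < F t := by
      rw [hFdef, Finset.lt_inf'_iff]
      intro p hp
      have : e p.1 < e p.2 := (Finset.mem_filter.mp hp).2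
      exact sub_pos.mpr (hord _ _ this)
    have hev : F ⁻¹' (Ioi 0) ∈ nhdsWithin t (Icc 0 1) :=
      (hFc t ht) (Ioi_mem_nhds hFt)
    rw [Metric.mem_nhdsWithin_iff] at hev
    obtain ⟨ε, hε, hsub⟩ := hev
    refine ⟨(max 0 (t - ε/2), min 1 (t + ε/2)), le_max_left _ _, ?_, min_le_left _ _, ?_⟩
    · rcases lt_or_ge t 1 with h1 | h1
      · exact lt_of_le_of_lt (max_le ht'.1 (by linarith)) (lt_min h1 (by linarith))
      · have : t = 1 := le_antisymm ht'.2 h1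
        subst this
        exact lt_of_lt_of_le (max_lt one_pos (by linarith)) (le_min le_rfl (by linarith))
    · intro s hs i j hij
      have hs1 : s ∈ Icc (0:ℝ) 1 := by
        constructor
        · exact le_trans (le_max_left _ _) hs.1
        · exact le_trans hs.2 (min_le_left _ _)
      have hball : s ∈ Metric.ball t ε := by
        rw [Metric.mem_ball, Real.dist_eq, abs_sub_lt_iff]
        have h1 : t - ε/2 ≤ s := le_trans (le_max_right _ _) hs.1
        have h2 : s ≤ t + ε/2 := le_trans hs.2 (min_le_right _ _)
        constructor <;> linarith
      have hFs : 0 < F s := hsub ⟨hball, hs1⟩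
      have hmem : (i, j) ∈ P := by
        rw [hPdef]
        exact Finset.mem_filter.mpr ⟨Finset.mem_univ _, hij⟩
      have := Finset.inf'_le (fun p => c p.2 s - c p.1 s) hmem
      linarith
  · refine ⟨(0, 1), le_rfl, one_pos, le_rfl, ?_⟩
    intro s hs i j hij
    exact absurd (Finset.mem_filter.mpr ⟨Finset.mem_univ (i, j), hij⟩)
      (fun h => hP ⟨(i, j), h⟩)

lemma goodT_tub (e) (hex : ∃ ab, GoodT x c e ab) : GoodT x c e (tub x c e) := by
  rw [tub, dif_pos hex]
  exact hex.choose_spec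

lemma kmin_le_kmax (e) (he : ExtE x e) : kmin x e ≤ kmax x e := by
  by_cases hD : (DD x).Nonempty <;> by_cases hU : (UU x).Nonempty
  · rw [kmin, dif_pos hD, kmax, dif_pos hU]
    apply Finset.sup'_le
    intro d hd
    apply Finset.le_inf'
    intro u hu
    have hd' : (d : X) < x := (Finset.mem_filter.mp hd).2
    have hu' : x < (u : X) := (Finset.mem_filter.mp hu).2
    exact he d u (lt_trans hd' hu')
  · rw [kmin, dif_pos hD, kmax, dif_neg hU]
    apply Finset.sup'_le
    intro d hd
    exact (e d).2
  · rw [kmin, dif_neg hD]; exact Nat.zero_le _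
  · rw [kmin, dif_neg hD]; exact Nat.zero_le _

lemma le_AF {e k} {i : {y : X // y ≠ x}} (hik : (e i : ℕ) < k) (t : ℝ) :
    c i t ≤ AF x c B0 e k t := by
  have hmem : (some i) ∈ insert (none : Option {y : X // y ≠ x})
      ((Finset.univ.filter (fun j : {y : X // y ≠ x} => (e j : ℕ) < k)).image some) :=
    Finset.mem_insert_of_mem (Finset.mem_image_of_mem some
      (Finset.mem_filter.mpr ⟨Finset.mem_univ i, hik⟩))
  rw [AF]
  exact Finset.le_sup' (fun o => Option.elim o (lof x c B0 t) (fun j => c j t)) hmem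

lemma lof_le_AF (e k) (t : ℝ) : lof x c B0 t ≤ AF x c B0 e k t := by
  rw [AF]
  exact Finset.le_sup' (b := (none : Option {y : X // y ≠ x})) (fun o => Option.elim o (lof x c B0 t) (fun i => c i t))
    (Finset.mem_insert_self _ _)

lemma BF_le {e k} {i : {y : X // y ≠ x}} (hik : k ≤ (e i : ℕ)) (t : ℝ) :
    BF x c B0 e k t ≤ c i t := by
  have hmem : (some i) ∈ insert (none : Option {y : X // y ≠ x})
      ((Finset.univ.filter (fun j : {y : X // y ≠ x} => k ≤ (e j : ℕ))).image some) :=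
    Finset.mem_insert_of_mem (Finset.mem_image_of_mem some
      (Finset.mem_filter.mpr ⟨Finset.mem_univ i, hik⟩))
  rw [BF]
  exact Finset.inf'_le (fun o => Option.elim o (hif x c B0 t) (fun j => c j t)) hmem

lemma BF_le_hif (e k) (t : ℝ) : BF x c B0 e k t ≤ hif x c B0 t := by
  rw [BF]
  exact Finset.inf'_le (b := (none : Option {y : X // y ≠ x})) (fun o => Option.elim o (hif x c B0 t) (fun i => c i t))
    (Finset.mem_insert_self _ _)

include hlt hB hB0 in
lemma AF_lt_BF {e k} (hG : GoodT x c e (tub x c e)) (hk : k ∈ VV x e)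
    {s : ℝ} (hs : s ∈ Icc (ta x c e) (tb x c e)) :
    AF x c B0 e k s < BF x c B0 e k s := by
  obtain ⟨ha0, hab, hb1, hpers⟩ := hG
  have hs1 : s ∈ Icc (0:ℝ) 1 := ⟨le_trans ha0 hs.1, le_trans hs.2 hb1⟩
  obtain ⟨hk1, hk2⟩ := Finset.mem_Icc.mp hk
  rw [AF, Finset.sup'_lt_iff, BF]
  rintro o1 ho1
  rw [Finset.lt_inf'_iff]
  rintro o2 ho2
  rcases Finset.mem_insert.mp ho1 with rfl | ho1
  · rcases Finset.mem_insert.mp ho2 with rfl | ho2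
    · exact lof_lt_hif x c B0 hlt hB hB0 hs1
    · obtain ⟨j, hj, rfl⟩ := Finset.mem_image.mp ho2
      have hj' : k ≤ (e j : ℕ) := (Finset.mem_filter.mp hj).2
      simp only [Option.elim]
      by_cases hD : (DD x).Nonempty
      · rw [lof_eq x c B0 hD s, Finset.sup'_lt_iff]
        intro d hd
        have : (e d : ℕ) + 1 ≤ kmin x e := by
          rw [kmin, dif_pos hD]
          exact Finset.le_sup' (fun d => (e d : ℕ) + 1) hd
        have : e d < e j := by
          have : (e d : ℕ) < (e j : ℕ) := by omega
          exact this
        exact hpers s hs d j this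
      · rw [lof_eq' x c B0 hD s]
        exact neg_lt_c x c B0 hB j hs1
  · obtain ⟨i, hi, rfl⟩ := Finset.mem_image.mp ho1
    have hi' : (e i : ℕ) < k := (Finset.mem_filter.mp hi).2
    rcases Finset.mem_insert.mp ho2 with rfl | ho2
    · simp only [Option.elim]
      by_cases hU : (UU x).Nonempty
      · rw [hif_eq x c B0 hU s, Finset.lt_inf'_iff]
        intro u hu
        have : kmax x e ≤ (e u : ℕ) := by
          rw [kmax, dif_pos hU]
          exact Finset.inf'_le (fun u => (e u : ℕ)) hu
        have : e i < e u := by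
          have : (e i : ℕ) < (e u : ℕ) := by omega
          exact this
        exact hpers s hs i u this
      · rw [hif_eq' x c B0 hU s]
        exact c_lt_pos x c B0 hB i hs1
    · obtain ⟨j, hj, rfl⟩ := Finset.mem_image.mp ho2
      have hj' : k ≤ (e j : ℕ) := (Finset.mem_filter.mp hj).2
      simp only [Option.elim]
      have : e i < e j := by
        have : (e i : ℕ) < (e j : ℕ) := by omega
        exact this
      exact hpers s hs i j this

lemma tub_disj {e e'} (hG : GoodT x c e (tub x c e)) (hG' : GoodT x c e' (tub x c e'))
    {s : ℝ} (hs : s ∈ Icc (ta x c e) (tb x c e)) (hs' : s ∈ Icc (ta x c e') (tb x c e')) :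
    e = e' := by
  have key : ∀ (f g : {y : X // y ≠ x} ≃ Fin (Fintype.card {y : X // y ≠ x}))
      (hf : ∀ i j, f i < f j → c i s < c j s) (hg : ∀ i j, g i < g j → c i s < c j s)
      (i j : {y : X // y ≠ x}), f i < f j → g i < g j := by
    intro f g hf hg i j h
    rcases lt_trichotomy (g i) (g j) with h' | h' | h'
    · exact h'
    · have : i = j := g.injective h'
      subst this
      exact absurd h (lt_irrefl _)
    · exact absurd (hg j i h') (not_lt.mpr (le_of_lt (hf i j h)))
  have hf : ∀ i j, e i < e j → c i s < c j s := fun i j h => hG.2.2.2 s hs i j h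
  have hg : ∀ i j, e' i < e' j → c i s < c j s := fun i j h => hG'.2.2.2 s hs' i j h
  apply Equiv.ext
  intro i
  apply Fin.ext
  rw [← rank_eq' e i, ← rank_eq' e' i]
  apply congrArg Finset.card
  apply Finset.filter_congr
  intro j _
  exact ⟨fun h => key e e' hf hg j i h, fun h => key e' e hg hf j i h⟩

include hlt hB hB0 in
lemma epsA_bounds {e} (hG : GoodT x c e (tub x c e)) (he : ExtE x e) :
    0 < epsA x c B0 e ∧ epsA x c B0 e ≤ 1/2 := by
  have hV : (VV x e).Nonempty := Finset.nonempty_Icc.mpr (kmin_le_kmax x e he)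
  have hab : ta x c e < tb x c e := hG.2.1
  have hqa : tqa x c e ∈ Icc (ta x c e) (tb x c e) := by
    rw [tqa]; exact ⟨by linarith, by linarith⟩
  have hqa1 : tqa x c e ∈ Icc (0:ℝ) 1 := by
    constructor
    · exact le_trans hG.1 hqa.1
    · exact le_trans hqa.2 hG.2.2.1
  rw [epsA, dif_pos hV]
  constructor
  · apply mul_pos (by norm_num)
    apply lt_min one_pos
    rw [Finset.lt_inf'_iff]
    intro k hk
    apply div_pos
    · have h1 := AF_lt_BF x c B0 hlt hB hB0 hG hk hqa
      have h2 := lof_le_AF x c B0 e k (tqa x c e)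
      rw [MF]; linarith
    · have := lof_lt_hif x c B0 hlt hB hB0 hqa1
      linarith
  · have h1 : ∀ z : ℝ, 1/2 * min 1 z ≤ 1/2 := fun z => by
      have := min_le_left 1 z; linarith
    exact h1 _

include hlt hB hB0 in
lemma epsB_bounds {e} (hG : GoodT x c e (tub x c e)) (he : ExtE x e) :
    0 < epsB x c B0 e ∧ epsB x c B0 e ≤ 1/2 := by
  have hV : (VV x e).Nonempty := Finset.nonempty_Icc.mpr (kmin_le_kmax x e he)
  have hab : ta x c e < tb x c e := hG.2.1
  have hqb : tqb x c e ∈ Icc (ta x c e) (tb x c e) := by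
    rw [tqb]; exact ⟨by linarith, by linarith⟩
  have hqb1 : tqb x c e ∈ Icc (0:ℝ) 1 := by
    constructor
    · exact le_trans hG.1 hqb.1
    · exact le_trans hqb.2 hG.2.2.1
  rw [epsB, dif_pos hV]
  constructor
  · apply mul_pos (by norm_num)
    apply lt_min one_pos
    rw [Finset.lt_inf'_iff]
    intro k hk
    apply div_pos
    · have h1 := AF_lt_BF x c B0 hlt hB hB0 hG hk hqb
      have h2 := BF_le_hif x c B0 e k (tqb x c e)
      rw [MF]; linarith
    · have := lof_lt_hif x c B0 hlt hB hB0 hqb1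
      linarith
  · have h1 : ∀ z : ℝ, 1/2 * min 1 z ≤ 1/2 := fun z => by
      have := min_le_left 1 z; linarith
    exact h1 _

lemma psi_cont : Continuous (psiF x c B0) := by
  unfold psiF
  apply continuous_const.add
  apply continuous_finset_sum
  intro e _
  exact (tent_cont _ _ _).sub (tent_cont _ _ _)

lemma term_zero {e} (hG : GoodT x c e (tub x c e)) {t : ℝ}
    (ht : t ∉ Icc (ta x c e) (tb x c e)) :
    tent (tmid x c e) (tb x c e) (hup x c B0 e) t
      - tent (ta x c e) (tmid x c e) (hdn x c B0 e) t = 0 := by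
  have hab : ta x c e < tb x c e := hG.2.1
  have hmid1 : ta x c e < tmid x c e := by rw [tmid]; linarith
  have hmid2 : tmid x c e < tb x c e := by rw [tmid]; linarith
  have hout : t < ta x c e ∨ tb x c e < t := by
    rcases lt_or_ge t (ta x c e) with h | h
    · exact Or.inl h
    rcases lt_or_ge (tb x c e) t with h' | h'
    · exact Or.inr h'
    · exact absurd ⟨h, h'⟩ ht
  rcases hout with h | h
  · rw [tent_zero_outside _ _ _ _ hmid2 (Or.inl (by linarith)),
      tent_zero_outside _ _ _ _ hmid1 (Or.inl (by linarith))]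
    ring
  · rw [tent_zero_outside _ _ _ _ hmid2 (Or.inr (by linarith)),
      tent_zero_outside _ _ _ _ hmid1 (Or.inr (by linarith))]
    ring

include hc hlt hB hB0 hstar in
lemma psi_in (t : ℝ) : 0 < psiF x c B0 t ∧ psiF x c B0 t < 1 := by
  have hGall : ∀ e, ExtE x e → GoodT x c e (tub x c e) :=
    fun e he => goodT_tub x c e (exists_goodT x c hc hstar e he)
  rw [psiF]
  by_cases hex : ∃ e ∈ Finset.univ.filter (ExtE x), t ∈ Icc (ta x c e) (tb x c e)
  · obtain ⟨e, heE, hte⟩ := hex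
    have heX : ExtE x e := (Finset.mem_filter.mp heE).2
    have hsum : (∑ e' ∈ Finset.univ.filter (ExtE x),
        (tent (tmid x c e') (tb x c e') (hup x c B0 e') t
          - tent (ta x c e') (tmid x c e') (hdn x c B0 e') t))
        = tent (tmid x c e) (tb x c e) (hup x c B0 e) t
          - tent (ta x c e) (tmid x c e) (hdn x c B0 e) t := by
      apply Finset.sum_eq_single_of_mem e heE
      intro e' he' hne
      refine term_zero x c B0 (hGall e' (Finset.mem_filter.mp he').2) ?_
      intro hte'
      exact hne (tub_disj x c (hGall e' (Finset.mem_filter.mp he').2) (hGall e heX) hte' hte)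
    rw [hsum]
    have hupb := epsB_bounds x c B0 hlt hB hB0 (hGall e heX) heX
    have hdnb := epsA_bounds x c B0 hlt hB hB0 (hGall e heX) heX
    have h1 : 0 ≤ hup x c B0 e := by rw [hup]; linarith [hupb.2]
    have h2 : 0 ≤ hdn x c B0 e := by rw [hdn]; linarith [hdnb.2]
    have h3 : hup x c B0 e < 1/2 := by rw [hup]; linarith [hupb.1]
    have h4 : hdn x c B0 e < 1/2 := by rw [hdn]; linarith [hdnb.1]
    have t1 := tent_nonneg (tmid x c e) (tb x c e) (hup x c B0 e) t
    have t2 := tent_le (tmid x c e) (tb x c e) (hup x c B0 e) t h1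
    have t3 := tent_nonneg (ta x c e) (tmid x c e) (hdn x c B0 e) t
    have t4 := tent_le (ta x c e) (tmid x c e) (hdn x c B0 e) t h2
    constructor <;> linarith
  · push_neg at hex
    have hsum : (∑ e' ∈ Finset.univ.filter (ExtE x),
        (tent (tmid x c e') (tb x c e') (hup x c B0 e') t
          - tent (ta x c e') (tmid x c e') (hdn x c B0 e') t)) = 0 :=
      Finset.sum_eq_zero (fun e' he' =>
        term_zero x c B0 (hGall e' (Finset.mem_filter.mp he').2) (hex e' he'))
    rw [hsum]
    norm_num

include hc hlt hB hB0 hstar in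
lemma psi_at_qa {e} (he : ExtE x e) : psiF x c B0 (tqa x c e) = epsA x c B0 e := by
  have hGall : ∀ e, ExtE x e → GoodT x c e (tub x c e) :=
    fun e he => goodT_tub x c e (exists_goodT x c hc hstar e he)
  have hG := hGall e he
  have hab : ta x c e < tb x c e := hG.2.1
  have hmid1 : ta x c e < tmid x c e := by rw [tmid]; linarith
  have hmid2 : tmid x c e < tb x c e := by rw [tmid]; linarith
  have hqa : tqa x c e ∈ Icc (ta x c e) (tb x c e) := by
    rw [tqa]; exact ⟨by linarith, by linarith⟩
  have heE : e ∈ Finset.univ.filter (ExtE x) :=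
    Finset.mem_filter.mpr ⟨Finset.mem_univ _, he⟩
  rw [psiF]
  have hsum : (∑ e' ∈ Finset.univ.filter (ExtE x),
      (tent (tmid x c e') (tb x c e') (hup x c B0 e') (tqa x c e)
        - tent (ta x c e') (tmid x c e') (hdn x c B0 e') (tqa x c e)))
      = tent (tmid x c e) (tb x c e) (hup x c B0 e) (tqa x c e)
        - tent (ta x c e) (tmid x c e) (hdn x c B0 e) (tqa x c e) := by
    apply Finset.sum_eq_single_of_mem e heE
    intro e' he' hne
    refine term_zero x c B0 (hGall e' (Finset.mem_filter.mp he').2) ?_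
    intro hte'
    exact hne (tub_disj x c (hGall e' (Finset.mem_filter.mp he').2) hG hte' hqa)
  rw [hsum]
  have hdnb := epsA_bounds x c B0 hlt hB hB0 hG he
  have h2 : 0 ≤ hdn x c B0 e := by rw [hdn]; linarith [hdnb.2]
  have hz : tent (tmid x c e) (tb x c e) (hup x c B0 e) (tqa x c e) = 0 := by
    apply tent_zero_outside _ _ _ _ hmid2
    left
    rw [tqa, tmid]; linarith
  have hqaeq : tqa x c e = (ta x c e + tmid x c e)/2 := by rw [tqa, tmid]; ring
  have hp : tent (ta x c e) (tmid x c e) (hdn x c B0 e) (tqa x c e) = hdn x c B0 e := by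
    rw [hqaeq]
    exact tent_peak _ _ _ hmid1 h2
  rw [hz, hp, hdn]
  ring

include hc hlt hB hB0 hstar in
lemma psi_at_qb {e} (he : ExtE x e) : psiF x c B0 (tqb x c e) = 1 - epsB x c B0 e := by
  have hGall : ∀ e, ExtE x e → GoodT x c e (tub x c e) :=
    fun e he => goodT_tub x c e (exists_goodT x c hc hstar e he)
  have hG := hGall e he
  have hab : ta x c e < tb x c e := hG.2.1
  have hmid1 : ta x c e < tmid x c e := by rw [tmid]; linarith
  have hmid2 : tmid x c e < tb x c e := by rw [tmid]; linarith
  have hqb : tqb x c e ∈ Icc (ta x c e) (tb x c e) := by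
    rw [tqb]; exact ⟨by linarith, by linarith⟩
  have heE : e ∈ Finset.univ.filter (ExtE x) :=
    Finset.mem_filter.mpr ⟨Finset.mem_univ _, he⟩
  rw [psiF]
  have hsum : (∑ e' ∈ Finset.univ.filter (ExtE x),
      (tent (tmid x c e') (tb x c e') (hup x c B0 e') (tqb x c e)
        - tent (ta x c e') (tmid x c e') (hdn x c B0 e') (tqb x c e)))
      = tent (tmid x c e) (tb x c e) (hup x c B0 e) (tqb x c e)
        - tent (ta x c e) (tmid x c e) (hdn x c B0 e) (tqb x c e) := by
    apply Finset.sum_eq_single_of_mem e heE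
    intro e' he' hne
    refine term_zero x c B0 (hGall e' (Finset.mem_filter.mp he').2) ?_
    intro hte'
    exact hne (tub_disj x c (hGall e' (Finset.mem_filter.mp he').2) hG hte' hqb)
  rw [hsum]
  have hupb := epsB_bounds x c B0 hlt hB hB0 hG he
  have h2 : 0 ≤ hup x c B0 e := by rw [hup]; linarith [hupb.2]
  have hz : tent (ta x c e) (tmid x c e) (hdn x c B0 e) (tqb x c e) = 0 := by
    apply tent_zero_outside _ _ _ _ hmid1
    right
    rw [tqb, tmid]; linarith
  have hqbeq : tqb x c e = (tmid x c e + tb x c e)/2 := by rw [tqb, tmid]; ring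
  have hp : tent (tmid x c e) (tb x c e) (hup x c B0 e) (tqb x c e) = hup x c B0 e := by
    rw [hqbeq]
    exact tent_peak _ _ _ hmid2 h2
  rw [hz, hp, hup]
  ring

include hc in
lemma gF_cont : ContinuousOn (gF x c B0) (Icc 0 1) := by
  show ContinuousOn (fun t => lof x c B0 t + psiF x c B0 t * (hif x c B0 t - lof x c B0 t)) (Icc 0 1)
  exact (lof_cont x c B0 hc).add (((psi_cont x c B0).continuousOn).mul
    ((hif_cont x c B0 hc).sub (lof_cont x c B0 hc)))

include hc in
lemma MF_cont (e k) : ContinuousOn (MF x c B0 e k) (Icc 0 1) := by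
  have hA : ContinuousOn (AF x c B0 e k) (Icc 0 1) := by
    show ContinuousOn (fun t => (insert none ((Finset.univ.filter
      (fun i => (e i : ℕ) < k)).image some)).sup' (Finset.insert_nonempty _ _)
      (fun o => Option.elim o (lof x c B0 t) (fun i => c i t))) (Icc 0 1)
    apply contOn_sup'
    intro o _
    cases o with
    | none => exact lof_cont x c B0 hc
    | some i => exact hc i
  have hB' : ContinuousOn (BF x c B0 e k) (Icc 0 1) := by
    show ContinuousOn (fun t => (insert none ((Finset.univ.filter
      (fun i => k ≤ (e i : ℕ))).image some)).inf' (Finset.insert_nonempty _ _)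
      (fun o => Option.elim o (hif x c B0 t) (fun i => c i t))) (Icc 0 1)
    apply contOn_inf'
    intro o _
    cases o with
    | none => exact hif_cont x c B0 hc
    | some i => exact hc i
  show ContinuousOn (fun t => (AF x c B0 e k t + BF x c B0 e k t)/2) (Icc 0 1)
  exact (hA.add hB').div_const 2

include hc hlt hB hB0 hstar in
lemma crossing {e k} (he : ExtE x e) (hk : k ∈ VV x e) :
    ∃ s ∈ Icc (tqa x c e) (tqb x c e), gF x c B0 s = MF x c B0 e k s := by
  have hG := goodT_tub x c e (exists_goodT x c hc hstar e he)
  have hV : (VV x e).Nonempty := ⟨k, hk⟩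
  have hab : ta x c e < tb x c e := hG.2.1
  have hqab : tqa x c e ≤ tqb x c e := by rw [tqa, tqb]; linarith
  have hqa : tqa x c e ∈ Icc (ta x c e) (tb x c e) := by
    rw [tqa]; exact ⟨by linarith, by linarith⟩
  have hqb : tqb x c e ∈ Icc (ta x c e) (tb x c e) := by
    rw [tqb]; exact ⟨by linarith, by linarith⟩
  have hqa1 : tqa x c e ∈ Icc (0:ℝ) 1 := ⟨le_trans hG.1 hqa.1, le_trans hqa.2 hG.2.2.1⟩
  have hqb1 : tqb x c e ∈ Icc (0:ℝ) 1 := ⟨le_trans hG.1 hqb.1, le_trans hqb.2 hG.2.2.1⟩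
  -- value at tqa
  have hWa : 0 < hif x c B0 (tqa x c e) - lof x c B0 (tqa x c e) := by
    have := lof_lt_hif x c B0 hlt hB hB0 hqa1; linarith
  have hMa : lof x c B0 (tqa x c e) < MF x c B0 e k (tqa x c e) := by
    have h1 := AF_lt_BF x c B0 hlt hB hB0 hG hk hqa
    have h2 := lof_le_AF x c B0 e k (tqa x c e)
    rw [MF]; linarith
  have hepsa : epsA x c B0 e ≤ 1/2 * ((MF x c B0 e k (tqa x c e) - lof x c B0 (tqa x c e)) /
      (hif x c B0 (tqa x c e) - lof x c B0 (tqa x c e))) := by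
    rw [epsA, dif_pos hV]
    have h1 : min 1 ((VV x e).inf' hV (fun k' =>
        (MF x c B0 e k' (tqa x c e) - lof x c B0 (tqa x c e)) /
          (hif x c B0 (tqa x c e) - lof x c B0 (tqa x c e)))) ≤
        (MF x c B0 e k (tqa x c e) - lof x c B0 (tqa x c e)) /
          (hif x c B0 (tqa x c e) - lof x c B0 (tqa x c e)) :=
      le_trans (min_le_right _ _) (Finset.inf'_le _ hk)
    linarith
  have hga : gF x c B0 (tqa x c e) < MF x c B0 e k (tqa x c e) := by
    have hψ := psi_at_qa x c B0 hc hlt hB hB0 hstar he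
    have hgeq : gF x c B0 (tqa x c e) = lof x c B0 (tqa x c e) +
        psiF x c B0 (tqa x c e) * (hif x c B0 (tqa x c e) - lof x c B0 (tqa x c e)) := rfl
    rw [hgeq, hψ]
    have hmul : epsA x c B0 e * (hif x c B0 (tqa x c e) - lof x c B0 (tqa x c e)) ≤
        (MF x c B0 e k (tqa x c e) - lof x c B0 (tqa x c e)) / 2 := by
      have := mul_le_mul_of_nonneg_right hepsa (le_of_lt hWa)
      calc epsA x c B0 e * (hif x c B0 (tqa x c e) - lof x c B0 (tqa x c e))
          ≤ 1/2 * ((MF x c B0 e k (tqa x c e) - lof x c B0 (tqa x c e)) /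
            (hif x c B0 (tqa x c e) - lof x c B0 (tqa x c e))) *
            (hif x c B0 (tqa x c e) - lof x c B0 (tqa x c e)) := this
        _ = (MF x c B0 e k (tqa x c e) - lof x c B0 (tqa x c e)) / 2 := by
            field_simp
    linarith
  -- value at tqb
  have hWb : 0 < hif x c B0 (tqb x c e) - lof x c B0 (tqb x c e) := by
    have := lof_lt_hif x c B0 hlt hB hB0 hqb1; linarith
  have hMb : MF x c B0 e k (tqb x c e) < hif x c B0 (tqb x c e) := by
    have h1 := AF_lt_BF x c B0 hlt hB hB0 hG hk hqb
    have h2 := BF_le_hif x c B0 e k (tqb x c e)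
    rw [MF]; linarith
  have hepsb : epsB x c B0 e ≤ 1/2 * ((hif x c B0 (tqb x c e) - MF x c B0 e k (tqb x c e)) /
      (hif x c B0 (tqb x c e) - lof x c B0 (tqb x c e))) := by
    rw [epsB, dif_pos hV]
    have h1 : min 1 ((VV x e).inf' hV (fun k' =>
        (hif x c B0 (tqb x c e) - MF x c B0 e k' (tqb x c e)) /
          (hif x c B0 (tqb x c e) - lof x c B0 (tqb x c e)))) ≤
        (hif x c B0 (tqb x c e) - MF x c B0 e k (tqb x c e)) /
          (hif x c B0 (tqb x c e) - lof x c B0 (tqb x c e)) :=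
      le_trans (min_le_right _ _) (Finset.inf'_le _ hk)
    linarith
  have hgb : MF x c B0 e k (tqb x c e) < gF x c B0 (tqb x c e) := by
    have hψ := psi_at_qb x c B0 hc hlt hB hB0 hstar he
    have hgeq : gF x c B0 (tqb x c e) = lof x c B0 (tqb x c e) +
        psiF x c B0 (tqb x c e) * (hif x c B0 (tqb x c e) - lof x c B0 (tqb x c e)) := rfl
    rw [hgeq, hψ]
    have hmul : epsB x c B0 e * (hif x c B0 (tqb x c e) - lof x c B0 (tqb x c e)) ≤
        (hif x c B0 (tqb x c e) - MF x c B0 e k (tqb x c e)) / 2 := by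
      have := mul_le_mul_of_nonneg_right hepsb (le_of_lt hWb)
      calc epsB x c B0 e * (hif x c B0 (tqb x c e) - lof x c B0 (tqb x c e))
          ≤ 1/2 * ((hif x c B0 (tqb x c e) - MF x c B0 e k (tqb x c e)) /
            (hif x c B0 (tqb x c e) - lof x c B0 (tqb x c e))) *
            (hif x c B0 (tqb x c e) - lof x c B0 (tqb x c e)) := this
        _ = (hif x c B0 (tqb x c e) - MF x c B0 e k (tqb x c e)) / 2 := by
            field_simp
    nlinarith
  -- IVT
  have hsub : Icc (tqa x c e) (tqb x c e) ⊆ Icc (0:ℝ) 1 :=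
    Icc_subset_Icc hqa1.1 hqb1.2
  have hFc : ContinuousOn (fun s => gF x c B0 s - MF x c B0 e k s)
      (Icc (tqa x c e) (tqb x c e)) :=
    ((gF_cont x c B0 hc).sub (MF_cont x c B0 hc e k)).mono hsub
  have hIcc := intermediate_value_Icc hqab hFc
  have h0 : (0:ℝ) ∈ Icc (gF x c B0 (tqa x c e) - MF x c B0 e k (tqa x c e))
      (gF x c B0 (tqb x c e) - MF x c B0 e k (tqb x c e)) := ⟨by linarith, by linarith⟩
  obtain ⟨s, hsmem, hFs⟩ := hIcc h0
  exact ⟨s, hsmem, by dsimp at hFs; linarith⟩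

end Lems
section RC
attribute [local instance] Classical.propDecidable

lemma rank_char {X : Type*} [Fintype X] [DecidableEq X] (x : X) {n : ℕ}
    (e : {y : X // y ≠ x} ≃ Fin n) (L : X → X → Prop) (hSTO : IsStrictTotalOrder X L)
    (hLe : ∀ i j : {y : X // y ≠ x}, e i < e j ↔ L ↑i ↑j) (i : {y : X // y ≠ x}) :
    L ↑i x ↔ (e i : ℕ) < (Finset.univ.filter (fun j : {y : X // y ≠ x} => L ↑j x)).card := by
  haveI := hSTO
  have hrank : (e i : ℕ) = (Finset.univ.filter (fun j : {y : X // y ≠ x} => L ↑j ↑i)).card := by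
    rw [← rank_eq' e i]
    apply congrArg Finset.card
    apply Finset.filter_congr
    intro j _
    exact hLe j i
  constructor
  · intro hix
    have hsub : insert i (Finset.univ.filter (fun j : {y : X // y ≠ x} => L ↑j ↑i)) ⊆
        Finset.univ.filter (fun j : {y : X // y ≠ x} => L ↑j x) := by
      intro j hj
      rcases Finset.mem_insert.mp hj with rfl | hj
      · exact Finset.mem_filter.mpr ⟨Finset.mem_univ _, hix⟩
      · exact Finset.mem_filter.mpr ⟨Finset.mem_univ _,
          trans_of L (Finset.mem_filter.mp hj).2 hix⟩
    have hni : i ∉ Finset.univ.filter (fun j : {y : X // y ≠ x} => L ↑j ↑i) := by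
      simp only [Finset.mem_filter]
      rintro ⟨-, h⟩
      exact irrefl_of L _ h
    have hcard := Finset.card_le_card hsub
    rw [Finset.card_insert_of_notMem hni] at hcard
    omega
  · intro hlt'
    by_contra hnix
    have hxi : L x ↑i := by
      rcases trichotomous_of L (↑i) x with h | h | h
      · exact absurd h hnix
      · exact absurd h i.2
      · exact h
    have hsub : Finset.univ.filter (fun j : {y : X // y ≠ x} => L ↑j x) ⊆
        Finset.univ.filter (fun j : {y : X // y ≠ x} => L ↑j ↑i) := by
      intro j hj
      exact Finset.mem_filter.mpr ⟨Finset.mem_univ _,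
        trans_of L (Finset.mem_filter.mp hj).2 hxi⟩
    have := Finset.card_le_card hsub
    omega

end RC

theorem stmt8 {X : Type*} [Fintype X] [DecidableEq X] [PartialOrder X] (x : X)
    (c : {y : X // y ≠ x} → ℝ → ℝ)
    (hrep : RepCurves (fun a b : {y : X // y ≠ x} => (a : X) < (b : X)) c)
    (hstar : StarProp (fun a b : {y : X // y ≠ x} => (a : X) < (b : X)) c) :
    ∃ g : ℝ → ℝ,
      RepCurves (fun a b : X => a < b)
        (fun y => if h : y = x then g else c ⟨y, h⟩) ∧
      StarProp (fun a b : X => a < b)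
        (fun y => if h : y = x then g else c ⟨y, h⟩) := by
  classical
  obtain ⟨hc, hlt, hiff⟩ := hrep
  rcases isEmpty_or_nonempty {y : X // y ≠ x} with hem | hne
  · -- degenerate case : X = {x}
    have hall : ∀ y : X, y = x := fun y => by
      by_contra h
      exact hem.false ⟨y, h⟩
    refine ⟨fun _ => 0, ⟨?_, ?_, ?_⟩, ?_⟩
    · intro i
      by_cases h : i = x
      · have heq : (fun y => if h : y = x then (fun _ => (0:ℝ)) else c ⟨y, h⟩) i
            = (fun _ => (0:ℝ)) := by rw [h]; exact dif_pos rfl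
        rw [heq]; exact continuousOn_const
      · have heq : (fun y => if h : y = x then (fun _ => (0:ℝ)) else c ⟨y, h⟩) i
            = c ⟨i, h⟩ := dif_neg h
        rw [heq]; exact hc ⟨i, h⟩
    · intro p q hpq
      rw [hall p, hall q] at hpq
      exact absurd hpq (lt_irrefl x)
    · intro p q hne'
      rw [hall p, hall q] at hne'
      exact absurd rfl hne'
    · intro L hL hext
      refine ⟨0, ⟨le_rfl, zero_le_one⟩, ?_⟩
      intro p q hpq
      have hp := hall p
      have hq := hall q
      rw [hp, hq] at hpq
      haveI := hL
      exact absurd hpq (irrefl_of L x)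
  · -- main case
    have hbnd : ∀ i : {y : X // y ≠ x}, ∃ C, ∀ t ∈ Icc (0:ℝ) 1, |c i t| ≤ C := by
      intro i
      obtain ⟨C, hC⟩ :=
        (isCompact_Icc (a := (0:ℝ)) (b := 1)).exists_bound_of_continuousOn (hc i)
      exact ⟨C, fun t ht => by simpa [Real.norm_eq_abs] using hC t ht⟩
    choose Cf hCf using hbnd
    set B0 : ℝ := max 0 (Finset.univ.sup' Finset.univ_nonempty Cf) with hB0def
    have hB0 : 0 ≤ B0 := le_max_left _ _
    have hB : ∀ i, ∀ t ∈ Icc (0:ℝ) 1, |c i t| ≤ B0 := fun i t ht =>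
      le_trans (hCf i t ht)
        (le_trans (Finset.le_sup' Cf (Finset.mem_univ i)) (le_max_right _ _))
    set g : ℝ → ℝ := gF x c B0 with hgdef
    have hgt : ∀ t, g t = lof x c B0 t + psiF x c B0 t * (hif x c B0 t - lof x c B0 t) :=
      fun t => rfl
    have hgb : ∀ t ∈ Icc (0:ℝ) 1, lof x c B0 t < g t ∧ g t < hif x c B0 t := by
      intro t ht
      have hψ := psi_in x c B0 hc hlt hB hB0 hstar t
      have hW := lof_lt_hif x c B0 hlt hB hB0 ht
      rw [hgt t]
      constructor
      · nlinarith [hψ.1, hψ.2]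
      · nlinarith [hψ.1, hψ.2]
    have hdg : ∀ (i : {y : X // y ≠ x}), (i : X) < x → ∀ t ∈ Icc (0:ℝ) 1, c i t < g t := by
      intro i hi t ht
      have hmem : i ∈ DD x := by
        rw [DD]; exact Finset.mem_filter.mpr ⟨Finset.mem_univ _, hi⟩
      have h1 := le_lof x c B0 hmem t
      linarith [(hgb t ht).1]
    have hgu : ∀ (i : {y : X // y ≠ x}), x < (i : X) → ∀ t ∈ Icc (0:ℝ) 1, g t < c i t := by
      intro i hi t ht
      have hmem : i ∈ UU x := by
        rw [UU]; exact Finset.mem_filter.mpr ⟨Finset.mem_univ _, hi⟩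
      have h1 := hif_le x c B0 hmem t
      linarith [(hgb t ht).2]
    have hgcont : ContinuousOn g (Icc 0 1) := gF_cont x c B0 hc
    have hcvx : (fun y => if h : y = x then g else c ⟨y, h⟩) x = g := dif_pos rfl
    have hcvne : ∀ (y : X) (hy : y ≠ x),
        (fun y => if h : y = x then g else c ⟨y, h⟩) y = c ⟨y, hy⟩ :=
      fun y hy => dif_neg hy
    -- Star property for the extended family
    have hSP : StarProp (fun a b : X => a < b)
        (fun y => if h : y = x then g else c ⟨y, h⟩) := by
      intro L hL hext
      haveI := hL
      have hSTOr : IsStrictTotalOrder {y : X // y ≠ x} (fun i j => L ↑i ↑j) := by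
        refine { trichotomous := ?_, irrefl := ?_, trans := ?_ }
        · intro i j hn1 hn2
          rcases trichotomous_of L (↑i) (↑j) with h | h | h
          · exact absurd h hn1
          · exact Subtype.ext h
          · exact absurd h hn2
        · intro i h
          exact irrefl_of L _ h
        · intro i j k h1 h2
          exact trans_of L h1 h2
      obtain ⟨e, hLe⟩ := exists_equiv_of_sto (fun i j : {y : X // y ≠ x} => L ↑i ↑j) hSTOr
      have heExt : ExtE x e := fun i j hij => (hLe i j).mpr (hext ↑i ↑j hij)
      set k := (Finset.univ.filter (fun j : {y : X // y ≠ x} => L ↑j x)).card with hkdef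
      have hrc : ∀ i : {y : X // y ≠ x}, L ↑i x ↔ (e i : ℕ) < k :=
        fun i => rank_char x e L hL hLe i
      have hkV : k ∈ VV x e := by
        rw [VV, Finset.mem_Icc]
        constructor
        · rw [kmin]
          split_ifs with hD
          · apply Finset.sup'_le
            intro d hd
            have hdx : (d : X) < x := by
              rw [DD] at hd
              exact (Finset.mem_filter.mp hd).2
            have := (hrc d).mp (hext _ _ hdx)
            omega
          · exact Nat.zero_le _
        · rw [kmax]
          split_ifs with hU
          · apply Finset.le_inf'
            intro u hu
            have hxu : x < (u : X) := by
              rw [UU] at hu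
              exact (Finset.mem_filter.mp hu).2
            have hLxu : L x ↑u := hext _ _ hxu
            have hnux : ¬ L ↑u x := fun h => irrefl_of L x (trans_of L hLxu h)
            have h2 : ¬ ((e u : ℕ) < k) := fun hh => hnux ((hrc u).mpr hh)
            omega
          · calc k ≤ (Finset.univ : Finset {y : X // y ≠ x}).card :=
                Finset.card_filter_le _ _
              _ = Fintype.card {y : X // y ≠ x} := Finset.card_univ
      obtain ⟨s, hsmem, hgs⟩ := crossing x c B0 hc hlt hB hB0 hstar heExt hkV
      have hG := goodT_tub x c e (exists_goodT x c hc hstar e heExt)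
      have hab : ta x c e < tb x c e := hG.2.1
      have hstube : s ∈ Icc (ta x c e) (tb x c e) := by
        have h1 : ta x c e ≤ tqa x c e := by rw [tqa]; linarith
        have h2 : tqb x c e ≤ tb x c e := by rw [tqb]; linarith
        exact ⟨le_trans h1 hsmem.1, le_trans hsmem.2 h2⟩
      have hs01 : s ∈ Icc (0:ℝ) 1 := ⟨le_trans hG.1 hstube.1, le_trans hstube.2 hG.2.2.1⟩
      have hABlt := AF_lt_BF x c B0 hlt hB hB0 hG hkV hstube
      have hgsM : g s = MF x c B0 e k s := hgs
      refine ⟨s, hs01, ?_⟩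
      intro p q hpq
      by_cases hp : p = x <;> by_cases hq : q = x
      · rw [hp, hq] at hpq
        exact absurd hpq (irrefl_of L x)
      · -- p = x, q ≠ x
        rw [hp] at hpq
        rw [hp, hcvx, hcvne q hq]
        have hnqx : ¬ L q x := fun h => irrefl_of L x (trans_of L hpq h)

        have hk2 : k ≤ (e ⟨q, hq⟩ : ℕ) := by
          have h2 : ¬ ((e ⟨q, hq⟩ : ℕ) < k) := fun hh => hnqx ((hrc ⟨q, hq⟩).mpr hh)
          omega
        have hBle := BF_le x c B0 hk2 s
        rw [hgsM, MF]
        linarith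
      · -- q = x, p ≠ x
        rw [hq] at hpq
        rw [hq, hcvx, hcvne p hp]
        have hk2 : (e ⟨p, hp⟩ : ℕ) < k := (hrc ⟨p, hp⟩).mp hpq
        have hAle := le_AF x c B0 hk2 s
        rw [hgsM, MF]
        linarith
      · rw [hcvne p hp, hcvne q hq]
        have : e ⟨p, hp⟩ < e ⟨q, hq⟩ := (hLe _ _).mpr hpq
        exact hG.2.2.2 s hstube _ _ this
    have hcross : ∀ (q : X) (hq : q ≠ x), ¬ x < q → ¬ q < x →
        ∃ t ∈ Icc (0:ℝ) 1, g t = c ⟨q, hq⟩ t := by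
      intro q hq h1 h2
      obtain ⟨L1, hL1, hext1, hxq1⟩ := exists_sto_pair h1 h2 (Ne.symm hq)
      obtain ⟨L2, hL2, hext2, hqx2⟩ := exists_sto_pair h2 h1 hq
      obtain ⟨t1, ht1, hord1⟩ := hSP L1 hL1 hext1
      obtain ⟨t2, ht2, hord2⟩ := hSP L2 hL2 hext2
      have e1 : g t1 < c ⟨q, hq⟩ t1 := by
        have := hord1 x q hxq1
        rwa [hcvx, hcvne q hq] at this
      have e2 : c ⟨q, hq⟩ t2 < g t2 := by
        have := hord2 q x hqx2
        rwa [hcvx, hcvne q hq] at this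
      have hsub : uIcc t1 t2 ⊆ Icc (0:ℝ) 1 := uIcc_subset_Icc ht1 ht2
      have hFc : ContinuousOn (fun t => g t - c ⟨q, hq⟩ t) (uIcc t1 t2) :=
        (hgcont.sub (hc ⟨q, hq⟩)).mono hsub
      have hIV := intermediate_value_uIcc hFc
      have h0 : (0:ℝ) ∈ uIcc (g t1 - c ⟨q, hq⟩ t1) (g t2 - c ⟨q, hq⟩ t2) := by
        rw [mem_uIcc]
        exact Or.inl ⟨by linarith only [e1], by linarith only [e2]⟩
      obtain ⟨t, htmem, hFt⟩ := hIV h0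
      refine ⟨t, hsub htmem, ?_⟩
      dsimp at hFt
      linarith only [hFt]
    refine ⟨g, ⟨?_, ?_, ?_⟩, hSP⟩
    · intro i
      by_cases h : i = x
      · have heq : (fun y => if h : y = x then g else c ⟨y, h⟩) i = g := by
          rw [h]; exact hcvx
        rw [heq]; exact hgcont
      · rw [hcvne i h]; exact hc ⟨i, h⟩
    · intro p q hpq t ht
      by_cases hp : p = x <;> by_cases hq : q = x
      · rw [hp, hq] at hpq
        exact absurd hpq (lt_irrefl x)
      · rw [hp] at hpq
        rw [hp, hcvx, hcvne q hq]
        exact hgu ⟨q, hq⟩ hpq t ht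
      · rw [hq] at hpq
        rw [hq, hcvx, hcvne p hp]
        exact hdg ⟨p, hp⟩ hpq t ht
      · rw [hcvne p hp, hcvne q hq]
        exact hlt ⟨p, hp⟩ ⟨q, hq⟩ hpq t ht
    · intro p q hpqne
      by_cases hp : p = x <;> by_cases hq : q = x
      · rw [hp, hq] at hpqne
        exact absurd rfl hpqne
      · -- p = x
        subst hp
        constructor
        · rintro ⟨h1, h2⟩
          obtain ⟨t, ht, heq⟩ := hcross q hq h1 h2
          refine ⟨t, ht, ?_⟩
          rw [hcvx, hcvne q hq]
          exact heq
        · rintro ⟨t, ht, heq⟩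
          rw [hcvx, hcvne q hq] at heq
          refine ⟨fun hlt' => ?_, fun hlt' => ?_⟩
          · have := hgu ⟨q, hq⟩ hlt' t ht
            linarith
          · have := hdg ⟨q, hq⟩ hlt' t ht
            linarith
      · -- q = x
        subst hq
        constructor
        · rintro ⟨h1, h2⟩
          obtain ⟨t, ht, heq⟩ := hcross p hp h2 h1
          refine ⟨t, ht, ?_⟩
          rw [hcvx, hcvne p hp]
          exact heq.symm
        · rintro ⟨t, ht, heq⟩
          rw [hcvx, hcvne p hp] at heq
          refine ⟨fun hlt' => ?_, fun hlt' => ?_⟩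
          · have := hdg ⟨p, hp⟩ hlt' t ht
            linarith
          · have := hgu ⟨p, hp⟩ hlt' t ht
            linarith
      · constructor
        · rintro ⟨h1, h2⟩
          have hne' : (⟨p, hp⟩ : {y : X // y ≠ x}) ≠ ⟨q, hq⟩ :=
            fun h => hpqne (congrArg Subtype.val h)
          obtain ⟨t, ht, heq⟩ := (hiff ⟨p, hp⟩ ⟨q, hq⟩ hne').mp ⟨h1, h2⟩
          refine ⟨t, ht, ?_⟩
          rw [hcvne p hp, hcvne q hq]
          exact heq
        · rintro ⟨t, ht, heq⟩
          rw [hcvne p hp, hcvne q hq] at heq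
          have hne' : (⟨p, hp⟩ : {y : X // y ≠ x}) ≠ ⟨q, hq⟩ :=
            fun h => hpqne (congrArg Subtype.val h)
          exact (hiff ⟨p, hp⟩ ⟨q, hq⟩ hne').mpr ⟨t, ht, heq⟩
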